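/- Let A be an n×n real SPD matrix, 𝓑 an m×m real SPD matrix, and Π an n×m real matrix such that (Πw)ᵀ A (Πw) ≤ γ · wᵀ 𝓑 w for all w ∈ ℝᵐ, for some constant γ > 0. Then vᵀ (Π 𝓑⁻¹ Πᵀ) v ≤ γ · vᵀ A⁻¹ v for all v ∈ ℝⁿ. -/

import Mathlib

open Matrix

private lemma dot_nonneg {k : ℕ} {M : Matrix (Fin k) (Fin k) ℝ} (hM : M.PosSemidef)
    (x : Fin k → ℝ) : 0 ≤ x ⬝ᵥ M.mulVec x := by simpa using hM.dotProduct_mulVec_nonneg x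

private lemma dot_pos {k : ℕ} {M : Matrix (Fin k) (Fin k) ℝ} (hM : M.PosDef)
    {x : Fin k → ℝ} (hx : x ≠ 0) : 0 < x ⬝ᵥ M.mulVec x := by simpa using hM.dotProduct_mulVec_pos hx

private lemma sym_dot {k : ℕ} {M : Matrix (Fin k) (Fin k) ℝ} (hM : M.IsHermitian)
    (x y : Fin k → ℝ) : x ⬝ᵥ M.mulVec y = y ⬝ᵥ M.mulVec x := by
  have hMt : Mᵀ = M := by
    have := hM; rwa [Matrix.IsHermitian, conjTranspose_eq_transpose_of_trivial] at this
  rw [dotProduct_mulVec, ← mulVec_transpose, hMt, dotProduct_comm]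

private lemma cs {k : ℕ} {M : Matrix (Fin k) (Fin k) ℝ} (hM : M.PosDef)
    (x y : Fin k → ℝ) :
    (x ⬝ᵥ M.mulVec y) ^ 2 ≤ (x ⬝ᵥ M.mulVec x) * (y ⬝ᵥ M.mulVec y) := by
  by_cases hy : y = 0
  · simp [hy]
  have ha : 0 < y ⬝ᵥ M.mulVec y := dot_pos hM hy
  have key : ∀ t : ℝ, 0 ≤ (y ⬝ᵥ M.mulVec y) * (t * t) + (2 * (x ⬝ᵥ M.mulVec y)) * t
      + (x ⬝ᵥ M.mulVec x) := by
    intro t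
    have h0 : 0 ≤ (x + t • y) ⬝ᵥ M.mulVec (x + t • y) := dot_nonneg hM.posSemidef _
    have hsym : y ⬝ᵥ M.mulVec x = x ⬝ᵥ M.mulVec y := sym_dot hM.isHermitian y x
    simp only [mulVec_add, mulVec_smul, dotProduct_add, add_dotProduct, dotProduct_smul,
      smul_dotProduct, smul_eq_mul, hsym] at h0
    nlinarith [h0]
  have hd := discrim_le_zero key
  rw [discrim] at hd
  nlinarith [hd]

/-- Continuity half of the fictitious space lemma. -/
theorem stmt_1 {n m : ℕ}
    (A : Matrix (Fin n) (Fin n) ℝ) (hA : A.PosDef)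
    (B : Matrix (Fin m) (Fin m) ℝ) (hB : B.PosDef)
    (P : Matrix (Fin n) (Fin m) ℝ)
    (γ : ℝ) (hγ : 0 < γ)
    (hcont : ∀ w : Fin m → ℝ,
      (P.mulVec w) ⬝ᵥ A.mulVec (P.mulVec w) ≤ γ * (w ⬝ᵥ B.mulVec w)) :
    ∀ v : Fin n → ℝ,
      v ⬝ᵥ (P * B⁻¹ * Pᵀ).mulVec v ≤ γ * (v ⬝ᵥ A⁻¹.mulVec v) := by
  intro v
  set w : Fin m → ℝ := B⁻¹.mulVec (Pᵀ.mulVec v) with hw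
  have hBinv : B * B⁻¹ = 1 := mul_nonsing_inv _ hB.det_pos.ne'.isUnit
  have hAinv : A * A⁻¹ = 1 := mul_nonsing_inv _ hA.det_pos.ne'.isUnit
  set s : ℝ := v ⬝ᵥ (P * B⁻¹ * Pᵀ).mulVec v with hs
  have hPw : (P * B⁻¹ * Pᵀ).mulVec v = P.mulVec w := by
    rw [hw, mulVec_mulVec, mulVec_mulVec]
  have hsPw : s = v ⬝ᵥ P.mulVec w := by rw [hs, hPw]
  have hBw : B.mulVec w = Pᵀ.mulVec v := by
    rw [hw, mulVec_mulVec, hBinv, one_mulVec]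
  have hsB : s = w ⬝ᵥ B.mulVec w := by
    rw [hBw, hsPw, dotProduct_mulVec, ← mulVec_transpose, dotProduct_comm]
  have hs0 : 0 ≤ s := hsB ▸ dot_nonneg hB.posSemidef w
  set x : Fin n → ℝ := A⁻¹.mulVec v with hx
  set y : Fin n → ℝ := P.mulVec w with hy
  have hAx : A.mulVec x = v := by rw [hx, mulVec_mulVec, hAinv, one_mulVec]
  have h1 : x ⬝ᵥ A.mulVec y = s := by
    rw [sym_dot hA.isHermitian, hAx, dotProduct_comm, hsPw]
  have h2 : x ⬝ᵥ A.mulVec x = v ⬝ᵥ A⁻¹.mulVec v := by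
    rw [sym_dot hA.isHermitian, hAx, dotProduct_comm, hx]
  have h3 : y ⬝ᵥ A.mulVec y ≤ γ * s := by rw [hsB]; exact hcont w
  have hcsq := cs hA x y
  rw [h1, h2] at hcsq
  have hAipos : 0 ≤ v ⬝ᵥ A⁻¹.mulVec v := dot_nonneg hA.inv.posSemidef v
  have hy0 : 0 ≤ y ⬝ᵥ A.mulVec y := dot_nonneg hA.posSemidef y
  rcases eq_or_lt_of_le hs0 with h | h
  · nlinarith
  · nlinarith [mul_le_mul_of_nonneg_left h3 hAipos]
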